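/- For all integers i ≥ 2 and real ε' with 0 ≤ ε' ≤ 1/i: if a cheating coalition faces one honest player A_i whose winning probability is at least 1/i − ε' at entry and at least j/(j+1) − ε' at each subsequent round j+1 (for j = i,...,n−1), then the coalition's probability of electing one of its members is at most 1 − 1/n + n·ε'. -/

import Mathlib

lemma key_prod_bound (i : ℕ) (hi : 2 ≤ i) (ε' : ℝ) (hε0 : 0 ≤ ε')
    (hε1 : ε' ≤ 1 / (i : ℝ)) :
    ∀ n, i ≤ n →
      (1 / (n : ℝ) - (n : ℝ) * ε') ≤
        (1 / (i : ℝ) - ε') * ∏ j ∈ Finset.Ico i n, ((j : ℝ) / ((j : ℝ) + 1) - ε') := by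
  have hi2 : (2:ℝ) ≤ (i:ℝ) := by exact_mod_cast hi
  have hi0 : (0:ℝ) < (i:ℝ) := by linarith
  have hε2 : ε' ≤ 1/2 := by
    have h : (1:ℝ)/(i:ℝ) ≤ 1/2 := by
      rw [div_le_div_iff₀ hi0 (by norm_num)]; linarith
    linarith
  intro n hn
  induction n, hn using Nat.le_induction with
  | base =>
    simp only [Finset.Ico_self, Finset.prod_empty, mul_one]
    nlinarith
  | succ n hn ih =>
    have hn2 : (2:ℝ) ≤ (n:ℝ) := by exact_mod_cast hi.trans hn
    have hn0 : (0:ℝ) < (n:ℝ) := by linarith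
    have hfac : (0:ℝ) ≤ (n:ℝ)/((n:ℝ)+1) - ε' := by
      have h : (1:ℝ)/2 ≤ (n:ℝ)/((n:ℝ)+1) := by
        rw [div_le_div_iff₀ (by norm_num) (by linarith)]; linarith
      linarith
    rw [Finset.prod_Ico_succ_top hn, ← mul_assoc]
    set P := (1 / (i : ℝ) - ε') * ∏ j ∈ Finset.Ico i n, ((j : ℝ) / ((j : ℝ) + 1) - ε') with hP
    have hPnn : 0 ≤ P := by
      apply mul_nonneg (by linarith)
      apply Finset.prod_nonneg
      intro j hj
      have hj2 : (2:ℝ) ≤ (j:ℝ) := by exact_mod_cast hi.trans (Finset.mem_Ico.mp hj).1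
      have h : (1:ℝ)/2 ≤ (j:ℝ)/((j:ℝ)+1) := by
        rw [div_le_div_iff₀ (by norm_num) (by linarith)]; linarith
      linarith
    by_cases hcase : 1/(n:ℝ) - (n:ℝ)*ε' ≤ 0
    · have hle : 1/((n:ℝ)+1) ≤ 1/(n:ℝ) := by
        rw [div_le_div_iff₀ (by linarith) hn0]; linarith
      have h1 : 1/((n:ℝ)+1) - ((n:ℝ)+1)*ε' ≤ 0 := by nlinarith
      push_cast
      calc 1/((n:ℝ)+1) - ((n:ℝ)+1)*ε' ≤ 0 := h1
        _ ≤ P * ((n:ℝ)/((n:ℝ)+1) - ε') := mul_nonneg hPnn hfac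
    · push_neg at hcase
      have h3 : (1/(n:ℝ) - (n:ℝ)*ε') * ((n:ℝ)/((n:ℝ)+1) - ε') ≤
          P * ((n:ℝ)/((n:ℝ)+1) - ε') :=
        mul_le_mul_of_nonneg_right ih hfac
      have h4 : 1/((n:ℝ)+1) - ((n:ℝ)+1)*ε' ≤
          (1/(n:ℝ) - (n:ℝ)*ε') * ((n:ℝ)/((n:ℝ)+1) - ε') := by
        have expand : (1/(n:ℝ) - (n:ℝ)*ε') * ((n:ℝ)/((n:ℝ)+1) - ε') =
            1/((n:ℝ)+1) - ε'/(n:ℝ) - (n:ℝ)^2*ε'/((n:ℝ)+1) + (n:ℝ)*ε'^2 := by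
          field_simp; ring
        rw [expand]
        have e1 : ε'/(n:ℝ) ≤ ε' := by
          rw [div_le_iff₀ hn0]; nlinarith
        have e2 : (n:ℝ)^2*ε'/((n:ℝ)+1) ≤ (n:ℝ)*ε' := by
          rw [div_le_iff₀ (by linarith)]; nlinarith
        nlinarith
      push_cast
      linarith

theorem coalition_bound (n i : ℕ) (hi : 2 ≤ i) (hin : i ≤ n)
    (ε' : ℝ) (hε0 : 0 ≤ ε') (hε1 : ε' ≤ 1 / (i : ℝ))
    (q : ℕ → ℝ) (hq0 : ∀ j, 0 ≤ q j)
    (hqi : q i ≥ 1 / (i : ℝ) - ε')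
    (hqj : ∀ j ∈ Finset.Ico i n, q (j + 1) ≥ (j : ℝ) / ((j : ℝ) + 1) - ε')
    (w : ℝ) (hw : w = 1 - q i * ∏ j ∈ Finset.Ico i n, q (j + 1)) :
    w ≤ 1 - 1 / (n : ℝ) + (n : ℝ) * ε' := by
  have hi2 : (2:ℝ) ≤ (i:ℝ) := by exact_mod_cast hi
  have hε2 : ε' ≤ 1/2 := by
    have h : (1:ℝ)/(i:ℝ) ≤ 1/2 := by
      rw [div_le_div_iff₀ (by linarith) (by norm_num)]; linarith
    linarith
  have hkey := key_prod_bound i hi ε' hε0 hε1 n hin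
  have hfacnn : ∀ j ∈ Finset.Ico i n, (0:ℝ) ≤ (j : ℝ) / ((j : ℝ) + 1) - ε' := by
    intro j hj
    have hj2 : (2:ℝ) ≤ (j:ℝ) := by exact_mod_cast hi.trans (Finset.mem_Ico.mp hj).1
    have h : (1:ℝ)/2 ≤ (j:ℝ)/((j:ℝ)+1) := by
      rw [div_le_div_iff₀ (by norm_num) (by linarith)]; linarith
    linarith
  have hprodle : (∏ j ∈ Finset.Ico i n, ((j : ℝ) / ((j : ℝ) + 1) - ε')) ≤
      ∏ j ∈ Finset.Ico i n, q (j + 1) :=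
    Finset.prod_le_prod hfacnn (fun j hj => hqj j hj)
  have hmul : (1 / (i : ℝ) - ε') * ∏ j ∈ Finset.Ico i n, ((j : ℝ) / ((j : ℝ) + 1) - ε') ≤
      q i * ∏ j ∈ Finset.Ico i n, q (j + 1) :=
    mul_le_mul hqi hprodle (Finset.prod_nonneg hfacnn) (hq0 i)
  rw [hw]
  linarith
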